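/- arXiv:1801.06258 — 2 statements merged into one kernel-verified Lean document; each statement's English description precedes it below -/
import Mathlib

section
/- For the SubsetSum instance, the best diffs from β_S to β_T under the family F(≤≥,+) have cost exactly n if and only if there exists a subset I ⊆ {1,…,n} with Σ_{i∈I} s_i = t. -/
open scoped Classical

/-- An operation of the family `F(≤≥,+)`: if `dir = true` the condition is `A ≤ a`,
otherwise the condition is `A ≥ a`; the modifier is the increment `B ← B + b`. -/
structure OpIneqAdd where
  dir : Bool
  a : ℝ
  b : ℝ

/-- The condition of an operation, evaluated on an `A`-value `v`. -/
def OpIneqAdd.cond (f : OpIneqAdd) (v : ℤ) : Prop :=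
  if f.dir then (v : ℝ) ≤ f.a else f.a ≤ (v : ℝ)

/-- Applying an operation: every key whose `A`-value satisfies the condition gets
its `B`-value incremented by `b`; other keys are unchanged. -/
noncomputable def OpIneqAdd.apply {K : Type*} (α : K → ℤ) (f : OpIneqAdd) (β : K → ℝ) :
    K → ℝ :=
  fun k => if f.cond (α k) then β k + f.b else β k

/-- Successive application of a finite sequence of operations. -/
noncomputable def applyOpsIneqAdd {K : Type*} (α : K → ℤ) (L : List OpIneqAdd) (β : K → ℝ) :
    K → ℝ :=
  L.foldl (fun β' f => f.apply α β') β

/-- `L` is a diff from `βS` to `βT` under `F(≤≥,+)`. -/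
def IsDiffIneqAdd {K : Type*} (α : K → ℤ) (L : List OpIneqAdd) (βS βT : K → ℝ) : Prop :=
  applyOpsIneqAdd α L βS = βT

/-- `L` is a best diff: a diff of minimum cost (the cost being the number of operations). -/
def IsBestDiffIneqAdd {K : Type*} (α : K → ℤ) (L : List OpIneqAdd) (βS βT : K → ℝ) : Prop :=
  IsDiffIneqAdd α L βS βT ∧
    ∀ L' : List OpIneqAdd, IsDiffIneqAdd α L' βS βT → L.length ≤ L'.length

/-- `A`-values of the SubsetSum instance: `α k = k` on the key set `K = {0,…,n}`. -/
def ssAlpha (n : ℕ) : Fin (n + 1) → ℤ := fun k => ((k : ℕ) : ℤ)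

/-- Source `B`-values of the SubsetSum instance: identically `0`. -/
def ssBS (n : ℕ) : Fin (n + 1) → ℝ := fun _ => 0

/-- Target `B`-values of the SubsetSum instance: `β_T k = b_k = ∑_{ℓ=0}^{k} s ℓ`. -/
noncomputable def ssBT (n : ℕ) (s : ℕ → ℤ) : Fin (n + 1) → ℝ :=
  fun k => ((∑ ℓ ∈ Finset.range ((k : ℕ) + 1), s ℓ : ℤ) : ℝ)

noncomputable def cOp (f : OpIneqAdd) (v : ℤ) : ℝ := if f.cond v then f.b else 0

instance : Inhabited OpIneqAdd := ⟨⟨true, 0, 0⟩⟩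

lemma applyOps_eq {K : Type*} (α : K → ℤ) (L : List OpIneqAdd) (β : K → ℝ) (k : K) :
    applyOpsIneqAdd α L β k = β k + (L.map (fun f => cOp f (α k))).sum := by
  induction L generalizing β with
  | nil => simp [applyOpsIneqAdd]
  | cons f L ih =>
    have h1 : applyOpsIneqAdd α (f :: L) β = applyOpsIneqAdd α L (f.apply α β) := rfl
    rw [h1, ih]
    have h2 : f.apply α β k = β k + cOp f (α k) := by
      unfold OpIneqAdd.apply cOp; split <;> simp
    rw [h2, List.map_cons, List.sum_cons]; ring

lemma cOp_boundary_unique {f : OpIneqAdd} {j k : ℤ} (hj : cOp f (j - 1) ≠ cOp f j)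
    (hk : cOp f (k - 1) ≠ cOp f k) : j = k := by
  have key : ∀ m : ℤ, cOp f (m - 1) ≠ cOp f m →
      ((f.dir = true ∧ (m : ℝ) - 1 ≤ f.a ∧ ¬((m : ℝ) ≤ f.a)) ∨
       (f.dir = false ∧ f.a ≤ (m : ℝ) ∧ ¬(f.a ≤ (m : ℝ) - 1))) := by
    intro m hm
    have hcond : ¬ (f.cond (m - 1) ↔ f.cond m) := by
      intro h
      exact hm (by unfold cOp; rw [if_congr h rfl rfl])
    unfold OpIneqAdd.cond at hcond
    cases hdir : f.dir with
    | true =>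
      rw [hdir] at hcond; simp only [if_true] at hcond
      push_cast at hcond
      left
      refine ⟨rfl, ?_, ?_⟩
      · by_contra hc
        exact hcond ⟨fun h => absurd h hc, fun h => le_trans (by linarith) h⟩
      · intro hc
        exact hcond ⟨fun _ => hc, fun _ => le_trans (by linarith) hc⟩
    | false =>
      rw [hdir] at hcond
      simp only [Bool.false_eq_true, if_false] at hcond
      push_cast at hcond
      right
      refine ⟨rfl, ?_, ?_⟩
      · by_contra hc
        exact hcond ⟨fun h => absurd (le_trans h (by linarith)) hc, fun h => absurd h hc⟩
      · intro hc
        exact hcond ⟨fun _ => le_trans hc (by linarith), fun _ => hc⟩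
  rcases key j hj with ⟨hd, hj1, hj2⟩ | ⟨hd, hj1, hj2⟩ <;>
    rcases key k hk with ⟨hd', hk1, hk2⟩ | ⟨hd', hk1, hk2⟩
  · have h1 : (j : ℝ) < (k : ℝ) + 1 := by
      by_contra hc; push_neg at hc; exact hk2 (le_trans (by linarith) hj1)
    have h2 : (k : ℝ) < (j : ℝ) + 1 := by
      by_contra hc; push_neg at hc; exact hj2 (le_trans (by linarith) hk1)
    have h1' : j < k + 1 := by exact_mod_cast h1
    have h2' : k < j + 1 := by exact_mod_cast h2
    omega
  · exact absurd (hd.symm.trans hd') (by simp)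
  · exact absurd (hd'.symm.trans hd) (by simp)
  · have h1 : (j : ℝ) < (k : ℝ) + 1 := by
      by_contra hc; push_neg at hc; exact hk2 (le_trans hj1 (by linarith))
    have h2 : (k : ℝ) < (j : ℝ) + 1 := by
      by_contra hc; push_neg at hc; exact hj2 (le_trans hk1 (by linarith))
    have h1' : j < k + 1 := by exact_mod_cast h1
    have h2' : k < j + 1 := by exact_mod_cast h2
    omega

lemma diff_sums {n : ℕ} {s : ℕ → ℤ} {L : List OpIneqAdd}
    (h : IsDiffIneqAdd (ssAlpha n) L (ssBS n) (ssBT n s)) :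
    ∀ m : ℕ, m ≤ n → (L.map (fun f => cOp f (m : ℤ))).sum
      = ((∑ ℓ ∈ Finset.range (m + 1), s ℓ : ℤ) : ℝ) := by
  intro m hm
  have hk := congrFun h ⟨m, by omega⟩
  rw [applyOps_eq] at hk
  simpa [ssAlpha, ssBS, ssBT] using hk

lemma diff_jump {n : ℕ} {s : ℕ → ℤ} {L : List OpIneqAdd}
    (h : IsDiffIneqAdd (ssAlpha n) L (ssBS n) (ssBT n s)) :
    ∀ k : ℕ, 1 ≤ k → k ≤ n →
      (L.map (fun f => cOp f (k : ℤ))).sum - (L.map (fun f => cOp f ((k : ℤ) - 1))).sum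
        = (s k : ℝ) := by
  intro k hk1 hkn
  have h1 := diff_sums h k hkn
  have h2 := diff_sums h (k - 1) (by omega)
  have hc : ((k - 1 : ℕ) : ℤ) = (k : ℤ) - 1 := by omega
  rw [hc] at h2
  have hr : (k - 1) + 1 = k := by omega
  rw [hr] at h2
  rw [h1, h2]
  rw [Finset.sum_range_succ]
  push_cast
  ring

lemma diff_boundary_exists {n : ℕ} {s : ℕ → ℤ} {L : List OpIneqAdd}
    (h : IsDiffIneqAdd (ssAlpha n) L (ssBS n) (ssBT n s))
    (hpos : ∀ i, 1 ≤ i → i ≤ n → 0 < s i) :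
    ∀ k ∈ Finset.Icc 1 n, ∃ f ∈ L, cOp f ((k : ℤ) - 1) ≠ cOp f (k : ℤ) := by
  intro k hk
  rw [Finset.mem_Icc] at hk
  by_contra hc
  push_neg at hc
  have heq : (L.map (fun f => cOp f ((k : ℤ) - 1))) = (L.map (fun f => cOp f (k : ℤ))) :=
    List.map_congr_left hc
  have hj := diff_jump h k hk.1 hk.2
  rw [← heq, sub_self] at hj
  have hz : s k = 0 := by exact_mod_cast hj.symm
  have := hpos k hk.1 hk.2
  omega

lemma lower_bound {n : ℕ} {s : ℕ → ℤ} {L : List OpIneqAdd}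
    (h : IsDiffIneqAdd (ssAlpha n) L (ssBS n) (ssBT n s))
    (hpos : ∀ i, 1 ≤ i → i ≤ n → 0 < s i) :
    n ≤ L.length := by
  classical
  set φ : ℕ → OpIneqAdd := fun k =>
    if hx : ∃ f ∈ L, cOp f ((k : ℤ) - 1) ≠ cOp f (k : ℤ) then hx.choose else default with hφ
  have hmem : ∀ k ∈ Finset.Icc 1 n, φ k ∈ L ∧ cOp (φ k) ((k : ℤ) - 1) ≠ cOp (φ k) (k : ℤ) := by
    intro k hk
    have hx := diff_boundary_exists h hpos k hk
    rw [hφ]; simp only [dif_pos hx]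
    exact ⟨hx.choose_spec.1, hx.choose_spec.2⟩
  have hinj : Set.InjOn φ (Finset.Icc 1 n) := by
    intro j hj k hk hjk
    have hj' := (hmem j (by simpa using hj)).2
    have hk' := (hmem k (by simpa using hk)).2
    rw [hjk] at hj'
    have := cOp_boundary_unique hj' hk'
    exact_mod_cast this
  calc n = (Finset.Icc 1 n).card := by simp
    _ ≤ L.toFinset.card := by
        apply Finset.card_le_card_of_injOn φ
        · intro k hk; rw [Finset.mem_coe, List.mem_toFinset]; exact (hmem k hk).1
        · exact hinj
    _ ≤ L.length := L.toFinset_card_le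

lemma cOp_ne_cases {f : OpIneqAdd} {m : ℤ} (hm : cOp f (m - 1) ≠ cOp f m) :
    (f.dir = true ∧ (m : ℝ) - 1 ≤ f.a ∧ ¬((m : ℝ) ≤ f.a)) ∨
    (f.dir = false ∧ f.a ≤ (m : ℝ) ∧ ¬(f.a ≤ (m : ℝ) - 1)) := by
  have hcond : ¬ (f.cond (m - 1) ↔ f.cond m) := by
    intro h
    exact hm (by unfold cOp; rw [if_congr h rfl rfl])
  unfold OpIneqAdd.cond at hcond
  cases hdir : f.dir with
  | true =>
    rw [hdir] at hcond; simp only [if_true] at hcond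
    push_cast at hcond
    left
    refine ⟨rfl, ?_, ?_⟩
    · by_contra hc
      exact hcond ⟨fun h => absurd h hc, fun h => le_trans (by linarith) h⟩
    · intro hc
      exact hcond ⟨fun _ => hc, fun _ => le_trans (by linarith) hc⟩
  | false =>
    rw [hdir] at hcond
    simp only [Bool.false_eq_true, if_false] at hcond
    push_cast at hcond
    right
    refine ⟨rfl, ?_, ?_⟩
    · by_contra hc
      exact hcond ⟨fun h => absurd (le_trans h (by linarith)) hc, fun h => absurd h hc⟩
    · intro hc
      exact hcond ⟨fun _ => le_trans hc (by linarith), fun _ => hc⟩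

lemma cOp_analysis {f : OpIneqAdd} {k : ℕ} (hk : 1 ≤ k) {r : ℝ} (hr : r ≠ 0)
    (hE : cOp f (k : ℤ) - cOp f ((k : ℤ) - 1) = r) :
    cOp f 0 = if f.dir then -r else 0 := by
  have hne : cOp f ((k : ℤ) - 1) ≠ cOp f (k : ℤ) := by
    intro h; rw [h, sub_self] at hE; exact hr hE.symm
  have h1k : (1 : ℝ) ≤ (k : ℝ) := by exact_mod_cast hk
  rcases cOp_ne_cases hne with ⟨hd, h1, h2⟩ | ⟨hd, h1, h2⟩
  · push_cast at h1 h2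
    have c1 : f.cond ((k : ℤ) - 1) := by
      unfold OpIneqAdd.cond; rw [hd]; simp only [if_true]; push_cast; exact h1
    have c2 : ¬ f.cond (k : ℤ) := by
      unfold OpIneqAdd.cond; rw [hd]; simp only [if_true]; push_cast; exact h2
    have e1 : cOp f ((k : ℤ) - 1) = f.b := by unfold cOp; rw [if_pos c1]
    have e2 : cOp f (k : ℤ) = 0 := by unfold cOp; rw [if_neg c2]
    rw [e1, e2] at hE
    have c0 : f.cond 0 := by
      unfold OpIneqAdd.cond; rw [hd]; simp only [if_true]; push_cast; linarith
    rw [hd]; simp only [if_true]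
    unfold cOp; rw [if_pos c0]; linarith
  · push_cast at h1 h2
    have c1 : ¬ f.cond ((k : ℤ) - 1) := by
      unfold OpIneqAdd.cond; rw [hd]; simp only [Bool.false_eq_true, if_false]; push_cast; exact h2
    have c2 : f.cond (k : ℤ) := by
      unfold OpIneqAdd.cond; rw [hd]; simp only [Bool.false_eq_true, if_false]; push_cast; exact h1
    have e1 : cOp f ((k : ℤ) - 1) = 0 := by unfold cOp; rw [if_neg c1]
    have e2 : cOp f (k : ℤ) = f.b := by unfold cOp; rw [if_pos c2]
    have c0 : ¬ f.cond 0 := by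
      unfold OpIneqAdd.cond; rw [hd]; simp only [Bool.false_eq_true, if_false]; push_cast
      intro hc; exact h2 (by linarith)
    rw [hd]; simp only [Bool.false_eq_true, if_false]
    unfold cOp; rw [if_neg c0]

lemma nodup_of_card {L : List OpIneqAdd} (h : L.toFinset.card = L.length) : L.Nodup := by
  rw [List.card_toFinset] at h
  have := (List.dedup_sublist L).eq_of_length h
  rw [← this]
  exact List.nodup_dedup L

lemma list_range_sum (g : ℕ → ℝ) (n : ℕ) :
    ((List.range n).map g).sum = ∑ j ∈ Finset.range n, g j := by
  induction n with
  | zero => simp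
  | succ n ih =>
    rw [List.range_succ, Finset.sum_range_succ, List.map_append, List.sum_append, ih]; simp

lemma key_sum (s' : ℕ → ℝ) (I : Finset ℕ) (n v : ℕ) (hI : I ⊆ Finset.Icc 1 n) (hv : v ≤ n)
    (hsum : ∑ i ∈ I, s' i = -(s' 0)) :
    ∑ k ∈ Finset.Icc 1 n,
        (if k ≤ v then (if k ∈ I then 0 else s' k) else (if k ∈ I then -(s' k) else 0))
      = ∑ ℓ ∈ Finset.range (v + 1), s' ℓ := by
  classical
  set ind : ℕ → ℝ := fun k => if k ∈ I then s' k else 0 with hind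
  set g : ℕ → ℝ := fun k =>
    if k ≤ v then (if k ∈ I then 0 else s' k) else (if k ∈ I then -(s' k) else 0) with hg
  have hsplit : ∑ k ∈ Finset.Ico 1 (v + 1), g k + ∑ k ∈ Finset.Ico (v + 1) (n + 1), g k
      = ∑ k ∈ Finset.Ico 1 (n + 1), g k :=
    Finset.sum_Ico_consecutive _ (by omega) (by omega)
  have e1 : ∑ k ∈ Finset.Ico 1 (v + 1), g k
      = ∑ k ∈ Finset.Ico 1 (v + 1), (s' k - ind k) := by
    apply Finset.sum_congr rfl
    intro k hk
    rw [Finset.mem_Ico] at hk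
    rw [hg, hind]
    simp only
    rw [if_pos (by omega : k ≤ v)]
    split_ifs <;> ring
  have e2 : ∑ k ∈ Finset.Ico (v + 1) (n + 1), g k
      = ∑ k ∈ Finset.Ico (v + 1) (n + 1), (-(ind k)) := by
    apply Finset.sum_congr rfl
    intro k hk
    rw [Finset.mem_Ico] at hk
    rw [hg, hind]
    simp only
    rw [if_neg (by omega : ¬ k ≤ v)]
    split_ifs <;> ring
  have e3 : ∑ k ∈ Finset.Ico 1 (v + 1), ind k + ∑ k ∈ Finset.Ico (v + 1) (n + 1), ind k
      = ∑ k ∈ Finset.Ico 1 (n + 1), ind k :=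
    Finset.sum_Ico_consecutive _ (by omega) (by omega)
  have e4 : ∑ k ∈ Finset.Ico 1 (n + 1), ind k = ∑ i ∈ I, s' i := by
    rw [Finset.Ico_add_one_right_eq_Icc, hind]
    simp only
    rw [Finset.sum_ite_mem, Finset.inter_eq_right.mpr hI]
  have e5 : ∑ ℓ ∈ Finset.range (v + 1), s' ℓ
      = ∑ j ∈ Finset.range v, s' (j + 1) + s' 0 := Finset.sum_range_succ' s' v
  have e6 : ∑ k ∈ Finset.Ico 1 (v + 1), s' k = ∑ j ∈ Finset.range v, s' (1 + j) := by
    rw [Finset.sum_Ico_eq_sum_range]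
    norm_num
  have e7 : ∑ j ∈ Finset.range v, s' (1 + j) = ∑ j ∈ Finset.range v, s' (j + 1) := by
    apply Finset.sum_congr rfl; intro j _; rw [add_comm]
  have goal1 : ∑ k ∈ Finset.Icc 1 n, g k = ∑ k ∈ Finset.Ico 1 (n + 1), g k := by
    rw [Finset.Ico_add_one_right_eq_Icc]
  rw [goal1, ← hsplit, e1, e2, Finset.sum_sub_distrib, Finset.sum_neg_distrib]
  rw [e5, ← e6, ← e7] at *
  linarith [e3, e4, hsum]

noncomputable def opk (s : ℕ → ℤ) (I : Finset ℕ) (k : ℕ) : OpIneqAdd :=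
  if k ∈ I then ⟨true, (k : ℝ) - 1, -(s k : ℝ)⟩ else ⟨false, (k : ℝ), (s k : ℝ)⟩

lemma cOp_opk (s : ℕ → ℤ) (I : Finset ℕ) (v k : ℕ) :
    cOp (opk s I k) ((v : ℕ) : ℤ)
      = if k ≤ v then (if k ∈ I then 0 else (s k : ℝ))
        else (if k ∈ I then -(s k : ℝ) else 0) := by
  have hcast : ((v : ℤ) : ℝ) = (v : ℝ) := by push_cast; rfl
  by_cases hkI : k ∈ I
  · have hd : opk s I k = ⟨true, (k : ℝ) - 1, -(s k : ℝ)⟩ := by unfold opk; rw [if_pos hkI]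
    rw [hd]
    unfold cOp OpIneqAdd.cond
    simp only [if_true, hcast]
    by_cases hkv : k ≤ v
    · have : ¬ ((v : ℝ) ≤ (k : ℝ) - 1) := by
        have : (k : ℝ) ≤ (v : ℝ) := by exact_mod_cast hkv
        linarith
      rw [if_neg this, if_pos hkv, if_pos hkI]
    · have : (v : ℝ) ≤ (k : ℝ) - 1 := by
        have : (v : ℝ) + 1 ≤ (k : ℝ) := by exact_mod_cast (by omega : v + 1 ≤ k)
        linarith
      rw [if_pos this, if_neg hkv, if_pos hkI]
  · have hd : opk s I k = ⟨false, (k : ℝ), (s k : ℝ)⟩ := by unfold opk; rw [if_neg hkI]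
    rw [hd]
    unfold cOp OpIneqAdd.cond
    simp only [Bool.false_eq_true, if_false, hcast]
    by_cases hkv : k ≤ v
    · have : (k : ℝ) ≤ (v : ℝ) := by exact_mod_cast hkv
      rw [if_pos this, if_pos hkv, if_neg hkI]
    · have : ¬ ((k : ℝ) ≤ (v : ℝ)) := by
        intro hc
        exact hkv (by exact_mod_cast hc)
      rw [if_neg this, if_neg hkv, if_neg hkI]

lemma exists_diff_of_subset (n : ℕ) (s : ℕ → ℤ) (t : ℤ) (hs0 : s 0 = -t)
    (I : Finset ℕ) (hI : I ⊆ Finset.Icc 1 n) (hsum : ∑ i ∈ I, s i = t) :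
    ∃ L : List OpIneqAdd,
      IsDiffIneqAdd (ssAlpha n) L (ssBS n) (ssBT n s) ∧ L.length = n := by
  classical
  refine ⟨(List.range n).map (fun j => opk s I (j + 1)), ?_, by simp⟩
  unfold IsDiffIneqAdd
  funext key
  rw [applyOps_eq]
  set v : ℕ := (key : ℕ) with hv
  have hvn : v ≤ n := by omega
  have h1 : ((List.range n).map (fun j => opk s I (j + 1))).map
        (fun f => cOp f (ssAlpha n key))
      = (List.range n).map (fun j => cOp (opk s I (j + 1)) ((v : ℕ) : ℤ)) := by
    rw [List.map_map]; rfl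
  rw [h1, list_range_sum]
  set s' : ℕ → ℝ := fun i => (s i : ℝ) with hs'
  have hterm : ∀ j ∈ Finset.range n,
      cOp (opk s I (j + 1)) ((v : ℕ) : ℤ)
        = (if (j + 1) ≤ v then (if (j + 1) ∈ I then 0 else s' (j + 1))
            else (if (j + 1) ∈ I then -(s' (j + 1)) else 0)) := by
    intro j _
    exact cOp_opk s I v (j + 1)
  rw [Finset.sum_congr rfl hterm]
  set G : ℕ → ℝ := fun k =>
    if k ≤ v then (if k ∈ I then 0 else s' k) else (if k ∈ I then -(s' k) else 0) with hG
  have h2 : ∑ j ∈ Finset.range n, G (j + 1) = ∑ k ∈ Finset.Icc 1 n, G k := by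
    rw [← Finset.Ico_add_one_right_eq_Icc, Finset.sum_Ico_eq_sum_range]
    norm_num
    apply Finset.sum_congr rfl
    intro j _
    rw [add_comm]
  have h3 : ∑ i ∈ I, s' i = -(s' 0) := by
    have hc : (∑ i ∈ I, (s i : ℝ)) = (t : ℝ) := by exact_mod_cast hsum
    simp only [hs', hs0]
    push_cast
    linarith
  have h4 := key_sum s' I n v hI hvn h3
  rw [h2, h4]
  unfold ssBS ssBT
  push_cast
  rw [zero_add]

lemma forward_subset {n : ℕ} {s : ℕ → ℤ} {t : ℤ} (hs0 : s 0 = -t)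
    (hpos : ∀ i, 1 ≤ i → i ≤ n → 0 < s i) {L : List OpIneqAdd}
    (hdiff : IsDiffIneqAdd (ssAlpha n) L (ssBS n) (ssBT n s)) (hlen : L.length = n) :
    ∃ I : Finset ℕ, I ⊆ Finset.Icc 1 n ∧ (∑ i ∈ I, s i) = t := by
  classical
  set φ : ℕ → OpIneqAdd := fun k =>
    if hx : ∃ f ∈ L, cOp f ((k : ℤ) - 1) ≠ cOp f (k : ℤ) then hx.choose else default with hφ
  have hmem : ∀ k ∈ Finset.Icc 1 n, φ k ∈ L ∧ cOp (φ k) ((k : ℤ) - 1) ≠ cOp (φ k) (k : ℤ) := by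
    intro k hk
    have hx := diff_boundary_exists hdiff hpos k hk
    rw [hφ]; simp only [dif_pos hx]
    exact ⟨hx.choose_spec.1, hx.choose_spec.2⟩
  have hinj : Set.InjOn φ (Finset.Icc 1 n) := by
    intro j hj k hk hjk
    have hj' := (hmem j (by simpa using hj)).2
    have hk' := (hmem k (by simpa using hk)).2
    rw [hjk] at hj'
    exact_mod_cast cOp_boundary_unique hj' hk'
  have himg : (Finset.Icc 1 n).image φ = L.toFinset := by
    apply Finset.eq_of_subset_of_card_le
    · intro f hf
      rw [Finset.mem_image] at hf
      obtain ⟨k, hk, rfl⟩ := hf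
      rw [List.mem_toFinset]
      exact (hmem k hk).1
    · calc L.toFinset.card ≤ L.length := L.toFinset_card_le
        _ = n := hlen
        _ = ((Finset.Icc 1 n).image φ).card := by
            rw [Finset.card_image_of_injOn hinj]; simp
  have hcard : L.toFinset.card = L.length := by
    rw [← himg, Finset.card_image_of_injOn hinj, hlen]; simp
  have hnodup : L.Nodup := nodup_of_card hcard
  have hS : ∀ v : ℤ, (L.map (fun f => cOp f v)).sum = ∑ k ∈ Finset.Icc 1 n, cOp (φ k) v := by
    intro v
    rw [← List.sum_toFinset _ hnodup, ← himg,
      Finset.sum_image (fun x hx y hy h => hinj hx hy h)]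
  have hEk : ∀ k ∈ Finset.Icc 1 n,
      cOp (φ k) (k : ℤ) - cOp (φ k) ((k : ℤ) - 1) = (s k : ℝ) := by
    intro k hk
    rw [Finset.mem_Icc] at hk
    have hj := diff_jump hdiff k hk.1 hk.2
    rw [hS, hS, ← Finset.sum_sub_distrib] at hj
    rw [← hj]
    symm
    apply Finset.sum_eq_single_of_mem k (Finset.mem_Icc.mpr hk)
    intro k' hk' hne
    have hb' := (hmem k' hk').2
    by_contra hc
    have hb : cOp (φ k') ((k : ℤ) - 1) ≠ cOp (φ k') (k : ℤ) := by
      intro h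
      apply hc
      rw [h, sub_self]
    have heq := cOp_boundary_unique hb hb'
    have heq' : k = k' := by exact_mod_cast heq
    exact hne heq'.symm
  have h0 : (L.map (fun f => cOp f (0 : ℤ))).sum = ((s 0 : ℤ) : ℝ) := by
    have h00 := diff_sums hdiff 0 (Nat.zero_le n)
    simpa using h00
  have h0' : ∑ k ∈ Finset.Icc 1 n, cOp (φ k) 0 = -(t : ℝ) := by
    rw [← hS 0, h0, hs0]; push_cast; ring
  have hterm0 : ∀ k ∈ Finset.Icc 1 n,
      cOp (φ k) 0 = (if (φ k).dir then -(s k : ℝ) else 0) := by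
    intro k hk
    rw [Finset.mem_Icc] at hk
    have hsne : (s k : ℝ) ≠ 0 := by
      have := hpos k hk.1 hk.2
      exact Int.cast_ne_zero.mpr (by omega)
    exact cOp_analysis hk.1 hsne (hEk k (Finset.mem_Icc.mpr hk))
  refine ⟨(Finset.Icc 1 n).filter (fun k => (φ k).dir = true), Finset.filter_subset _ _, ?_⟩
  have hfin : ∑ k ∈ Finset.Icc 1 n, (if (φ k).dir = true then -(s k : ℝ) else 0)
      = -(t : ℝ) := by
    rw [← Finset.sum_congr rfl hterm0]
    exact h0'
  have h5 : ∑ k ∈ (Finset.Icc 1 n).filter (fun k => (φ k).dir = true), -(s k : ℝ)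
      = -(t : ℝ) := by
    rw [Finset.sum_filter]; exact hfin
  have h6 : ∑ k ∈ (Finset.Icc 1 n).filter (fun k => (φ k).dir = true), (s k : ℝ)
      = (t : ℝ) := by
    rw [Finset.sum_neg_distrib] at h5; linarith
  exact_mod_cast h6

/-- For the SubsetSum instance, the best diffs from `β_S` to `β_T` under `F(≤≥,+)` have
cost exactly `n` if and only if there is a subset `I ⊆ {1,…,n}` with `∑_{i ∈ I} s i = t`. -/
theorem subsetSum_best_diff_cost_eq_iff (n : ℕ) (s : ℕ → ℤ) (t : ℤ)
    (ht : 0 < t) (hs0 : s 0 = -t) (hpos : ∀ i, 1 ≤ i → i ≤ n → 0 < s i) :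
    (∃ F : List OpIneqAdd,
        IsBestDiffIneqAdd (ssAlpha n) F (ssBS n) (ssBT n s) ∧ F.length = n) ↔
      ∃ I : Finset ℕ, I ⊆ Finset.Icc 1 n ∧ (∑ i ∈ I, s i) = t := by
  constructor
  · rintro ⟨L, ⟨hdiff, _⟩, hlen⟩
    exact forward_subset hs0 hpos hdiff hlen
  · rintro ⟨I, hI, hsum⟩
    obtain ⟨L, hdiff, hlen⟩ := exists_diff_of_subset n s t hs0 I hI hsum
    exact ⟨L, ⟨hdiff, fun L' hL' => by rw [hlen]; exact lower_bound hL' hpos⟩, hlen⟩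
end

section
/- For the SubsetSum instance, the best diffs from β_S to β_T under the family F(R,+) have cost n if and only if the best diffs from β_S to β_T under the family F(≤≥,+) have cost n. -/
open scoped Classical

/-- An operation of the family `F(R,+)`: reals `a ≤ z` and an increment `b`, with condition
`A ∈ [a, z]` and modifier `B ← B + b`. -/
structure OpRangeAdd where
  a : ℝ
  z : ℝ
  hle : a ≤ z
  b : ℝ

/-- The condition of an operation of `F(R,+)`, evaluated on an `A`-value `v`. -/
def OpRangeAdd.cond (f : OpRangeAdd) (v : ℤ) : Prop :=
  f.a ≤ (v : ℝ) ∧ (v : ℝ) ≤ f.z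

/-- Applying an operation of `F(R,+)`: every key whose `A`-value lies in `[a, z]` gets its
`B`-value incremented by `b`; other keys are unchanged. -/
noncomputable def OpRangeAdd.apply {K : Type*} (α : K → ℤ) (f : OpRangeAdd) (β : K → ℝ) :
    K → ℝ :=
  fun k => if f.cond (α k) then β k + f.b else β k

/-- Successive application of a finite sequence of operations of `F(R,+)`. -/
noncomputable def applyOpsRangeAdd {K : Type*} (α : K → ℤ) (L : List OpRangeAdd)
    (β : K → ℝ) : K → ℝ :=
  L.foldl (fun β' f => f.apply α β') β

/-- `L` is a diff from `βS` to `βT` under `F(R,+)`. -/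
def IsDiffRangeAdd {K : Type*} (α : K → ℤ) (L : List OpRangeAdd) (βS βT : K → ℝ) : Prop :=
  applyOpsRangeAdd α L βS = βT

/-- `L` is a best diff under `F(R,+)`: a diff of minimum cost (number of operations). -/
def IsBestDiffRangeAdd {K : Type*} (α : K → ℤ) (L : List OpRangeAdd) (βS βT : K → ℝ) :
    Prop :=
  IsDiffRangeAdd α L βS βT ∧
    ∀ L' : List OpRangeAdd, IsDiffRangeAdd α L' βS βT → L.length ≤ L'.length
section AuxDiff

open Finset

theorem applyOpsRangeAdd_eq_sum {K : Type*} (α : K → ℤ) (L : List OpRangeAdd) (β : K → ℝ)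
    (k : K) :
    applyOpsRangeAdd α L β k = β k + (L.map fun f => if f.cond (α k) then f.b else 0).sum := by
  induction L generalizing β with
  | nil => simp [applyOpsRangeAdd]
  | cons f L ih =>
    have h : applyOpsRangeAdd α (f :: L) β = applyOpsRangeAdd α L (f.apply α β) := rfl
    rw [h, ih]
    unfold OpRangeAdd.apply
    by_cases h2 : f.cond (α k) <;> simp [h2] <;> ring

theorem applyOpsIneqAdd_eq_sum {K : Type*} (α : K → ℤ) (L : List OpIneqAdd) (β : K → ℝ)
    (k : K) :
    applyOpsIneqAdd α L β k = β k + (L.map fun f => if f.cond (α k) then f.b else 0).sum := by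
  induction L generalizing β with
  | nil => simp [applyOpsIneqAdd]
  | cons f L ih =>
    have h : applyOpsIneqAdd α (f :: L) β = applyOpsIneqAdd α L (f.apply α β) := rfl
    rw [h, ih]
    unfold OpIneqAdd.apply
    by_cases h2 : f.cond (α k) <;> simp [h2] <;> ring

theorem toList_map_sum {α : Type*} (S : Finset α) (g : α → ℝ) :
    (S.toList.map g).sum = ∑ x ∈ S, g x := by
  rw [← Multiset.sum_coe, ← Multiset.map_coe, Finset.coe_toList]
  rfl

theorem finset_list_swap {ι : Type*} (F : Finset ℕ) (L : List ι) (h : ℕ → ι → ℝ) :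
    ∑ k ∈ F, (L.map fun f => h k f).sum = (L.map fun f => ∑ k ∈ F, h k f).sum := by
  induction L with
  | nil => simp
  | cons f L ih => simp [Finset.sum_add_distrib, ih]

end AuxDiff
section UnionFind

open Finset

/-- One union step: redirect the class of `e.1` to the class of `e.2`. -/
def ufStep (c : ℕ → ℕ) (e : ℕ × ℕ) : ℕ → ℕ := fun x => if c x = c e.1 then c e.2 else c x

/-- Union-find function generated by a list of edges. -/
def uf : List (ℕ × ℕ) → ℕ → ℕ
  | [] => id
  | e :: E => ufStep (uf E) e

theorem ufStep_eq_of_eq (c : ℕ → ℕ) (e : ℕ × ℕ) {x y : ℕ} (h : c x = c y) :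
    ufStep c e x = ufStep c e y := by unfold ufStep; rw [h]

theorem uf_edge : ∀ (E : List (ℕ × ℕ)), ∀ e ∈ E, uf E e.1 = uf E e.2 := by
  intro E
  induction E with
  | nil => intro e h; cases h
  | cons e' E ih =>
    intro e h
    rcases List.mem_cons.mp h with h | h
    · subst h
      show ufStep (uf E) e e.1 = ufStep (uf E) e e.2
      unfold ufStep
      by_cases h2 : uf E e.2 = uf E e.1 <;> simp [h2]
    · exact ufStep_eq_of_eq _ _ (ih e h)

theorem uf_card (m : ℕ) : ∀ E : List (ℕ × ℕ), m ≤ ((range m).image (uf E)).card + E.length := by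
  intro E
  induction E with
  | nil => simp [uf]
  | cons e E ih =>
    have hsub : (range m).image (uf E) ⊆ insert (uf E e.1) ((range m).image (uf (e :: E))) := by
      intro v hv
      rcases Finset.mem_image.mp hv with ⟨x, hx, rfl⟩
      by_cases h : uf E x = uf E e.1
      · rw [h]; exact Finset.mem_insert_self _ _
      · refine Finset.mem_insert_of_mem (Finset.mem_image.mpr ⟨x, hx, ?_⟩)
        show ufStep (uf E) e x = uf E x
        unfold ufStep; rw [if_neg h]
    have h2 := Finset.card_le_card hsub
    have h3 := Finset.card_insert_le (uf E e.1) ((range m).image (uf (e :: E)))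
    simp only [List.length_cons]
    omega

end UnionFind
section Endpoints

open Finset

/-- Endpoints `(p, q)` of a range operation on the keyset `{0,…,n}`: the operation covers
exactly the keys `k ≤ n` with `p ≤ k < q`. -/
noncomputable def epts (n : ℕ) (f : OpRangeAdd) : ℕ × ℕ :=
  if h : ((range (n+1)).filter fun k : ℕ => f.cond (k : ℤ)).Nonempty then
    (((range (n+1)).filter fun k : ℕ => f.cond (k : ℤ)).min' h,
     ((range (n+1)).filter fun k : ℕ => f.cond (k : ℤ)).max' h + 1)
  else (0, 0)

theorem epts_spec (n : ℕ) (f : OpRangeAdd) :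
    (epts n f).1 ≤ (epts n f).2 ∧ (epts n f).2 ≤ n + 1 ∧
      ∀ k : ℕ, k ≤ n → (f.cond (k : ℤ) ↔ (epts n f).1 ≤ k ∧ k < (epts n f).2) := by
  classical
  unfold epts
  by_cases h : ((range (n+1)).filter fun k : ℕ => f.cond (k : ℤ)).Nonempty
  · rw [dif_pos h]
    set T := (range (n+1)).filter fun k : ℕ => f.cond (k : ℤ) with hT
    set p := T.min' h with hp
    set q := T.max' h with hq
    obtain ⟨hmin, hminc⟩ := Finset.mem_filter.mp (T.min'_mem h)
    obtain ⟨hmax, hmaxc⟩ := Finset.mem_filter.mp (T.max'_mem h)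
    rw [Finset.mem_range] at hmin hmax
    have hmm : p ≤ q := Finset.min'_le _ _ (T.max'_mem h)
    refine ⟨by show p ≤ q + 1; omega, by show q + 1 ≤ n + 1; omega, ?_⟩
    intro k hk
    show f.cond (k : ℤ) ↔ p ≤ k ∧ k < q + 1
    constructor
    · intro hc
      have hmem : k ∈ T := Finset.mem_filter.mpr ⟨Finset.mem_range.mpr (by omega), hc⟩
      have h1 := Finset.min'_le _ _ hmem
      have h2 := Finset.le_max' _ _ hmem
      rw [← hp] at h1; rw [← hq] at h2
      omega
    · rintro ⟨h1, h2⟩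
      have ha : f.a ≤ ((p : ℤ) : ℝ) := hminc.1
      have hz : ((q : ℤ) : ℝ) ≤ f.z := hmaxc.2
      have h2' : k ≤ q := by omega
      refine ⟨le_trans ha ?_, le_trans ?_ hz⟩
      · exact_mod_cast h1
      · exact_mod_cast h2'
  · rw [dif_neg h]
    refine ⟨le_refl 0, by omega, ?_⟩
    intro k hk
    constructor
    · intro hc
      exact absurd ⟨k, Finset.mem_filter.mpr ⟨Finset.mem_range.mpr (by omega), hc⟩⟩ h
    · rintro ⟨h1, h2⟩
      show f.cond (k : ℤ)
      omega

end Endpoints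
section LowerBound

open Finset

theorem range_diff_lower (n : ℕ) (s : ℕ → ℤ) (t : ℤ) (ht : 0 < t) (hs0 : s 0 = -t)
    (hpos : ∀ i, 1 ≤ i → i ≤ n → 0 < s i)
    (L : List OpRangeAdd) (hL : IsDiffRangeAdd (ssAlpha n) L (ssBS n) (ssBT n s)) :
    n ≤ L.length ∧ (L.length = n → ∃ S ⊆ Finset.Icc 1 n, ∑ k ∈ S, s k = t) := by
  classical
  -- master equation
  have master : ∀ k : ℕ, k ≤ n →
      (L.map fun f => if f.cond (k : ℤ) then f.b else 0).sum
        = ((∑ ℓ ∈ range (k+1), s ℓ : ℤ) : ℝ) := by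
    intro k hk
    have h := congrFun hL ⟨k, by omega⟩
    rw [applyOpsRangeAdd_eq_sum] at h
    simp [ssBS, ssBT, ssAlpha] at h
    convert h using 1
    · simp [OpRangeAdd.cond]
    · push_cast; rfl
  -- edges and union-find
  set E := L.map (epts n) with hE
  set c := uf E with hc
  have hedge : ∀ f ∈ L, c (epts n f).1 = c (epts n f).2 := fun f hf =>
    uf_edge E (epts n f) (List.mem_map_of_mem hf)
  -- difference vector
  set D : ℕ → ℝ := fun j =>
    (L.map fun f =>
      (if (epts n f).1 = j then f.b else 0) - (if (epts n f).2 = j then f.b else 0)).sum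
    with hD
  -- prefix sums of D recover the target values
  have hpre : ∀ k : ℕ, k ≤ n →
      ∑ j ∈ range (k+1), D j = ((∑ ℓ ∈ range (k+1), s ℓ : ℤ) : ℝ) := by
    intro k hk
    rw [hD]
    rw [finset_list_swap, ← master k hk]
    congr 1
    apply List.map_congr_left
    intro f _
    rw [Finset.sum_sub_distrib, Finset.sum_ite_eq, Finset.sum_ite_eq]
    obtain ⟨hpq, hq2, hiff⟩ := epts_spec n f
    rw [hiff k hk]
    simp only [Finset.mem_range]
    by_cases h1 : (epts n f).1 < k + 1 <;> by_cases h2 : (epts n f).2 < k + 1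
    · have h3 : ¬((epts n f).1 ≤ k ∧ k < (epts n f).2) := by omega
      simp [h1, h2, h3]
    · have h3 : (epts n f).1 ≤ k ∧ k < (epts n f).2 := by omega
      simp [h1, h2, h3]
    · exfalso; omega
    · have h3 : ¬((epts n f).1 ≤ k ∧ k < (epts n f).2) := by omega
      simp [h1, h2, h3]
  -- values of D
  have hD0 : D 0 = -(t : ℝ) := by
    have h := hpre 0 (Nat.zero_le n)
    rw [Finset.sum_range_one] at h
    rw [h]
    simp [hs0]
  have hDk : ∀ k, 1 ≤ k → k ≤ n → D k = ((s k : ℤ) : ℝ) := by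
    intro k h1 h2
    have ha := hpre k h2
    have hb := hpre (k-1) (by omega)
    have hk1 : k - 1 + 1 = k := by omega
    rw [hk1] at hb
    have hc2 : D k = ∑ j ∈ range (k+1), D j - ∑ j ∈ range k, D j := by
      rw [Finset.sum_range_succ]; ring
    rw [hc2, ha, hb]
    push_cast [Finset.sum_range_succ]
    ring
  -- each fiber of the union-find sums D to zero
  have hfiber : ∀ v : ℕ, ∑ j ∈ (range (n+2)).filter (fun j => c j = v), D j = 0 := by
    intro v
    rw [Finset.sum_filter]
    have hsub : ∀ j ∈ range (n+2), (if c j = v then D j else 0)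
        = (L.map fun f => if c j = v then
            ((if (epts n f).1 = j then f.b else 0) - (if (epts n f).2 = j then f.b else 0))
            else 0).sum := by
      intro j _
      by_cases h : c j = v
      · simp only [h, if_true, hD]
      · simp only [h, if_false]
        symm
        apply List.sum_eq_zero
        intro x hx
        rcases List.mem_map.mp hx with ⟨f, _, rfl⟩
        rfl
    rw [Finset.sum_congr rfl hsub, finset_list_swap]
    apply List.sum_eq_zero
    intro x hx
    rcases List.mem_map.mp hx with ⟨f, hf, rfl⟩
    obtain ⟨hpq, hq2, _⟩ := epts_spec n f
    have hp2 : (epts n f).1 < n + 2 := by omega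
    have hq2' : (epts n f).2 < n + 2 := by omega
    have hsplit : ∀ j, (if c j = v then
          ((if (epts n f).1 = j then f.b else 0) - (if (epts n f).2 = j then f.b else 0))
          else 0)
        = (if (epts n f).1 = j then (if c j = v then f.b else 0) else 0)
          - (if (epts n f).2 = j then (if c j = v then f.b else 0) else 0) := by
      intro j
      by_cases h : c j = v
      · simp [h]
      · simp [h]
    rw [Finset.sum_congr rfl fun j _ => hsplit j, Finset.sum_sub_distrib,
      Finset.sum_ite_eq, Finset.sum_ite_eq,
      if_pos (Finset.mem_range.mpr hp2), if_pos (Finset.mem_range.mpr hq2'),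
      hedge f hf]
    ring
  -- positivity of D on [1, n]
  have hDpos : ∀ k, 1 ≤ k → k ≤ n → 0 < D k := by
    intro k h1 h2
    rw [hDk k h1 h2]
    exact_mod_cast hpos k h1 h2
  -- image cardinality bound
  have hcard := uf_card (n+2) E
  rw [← hc] at hcard
  have hElen : E.length = L.length := by rw [hE, List.length_map]
  -- the image is contained in {c 0, c (n+1)}
  have hIsub : (range (n+2)).image c ⊆ {c 0, c (n+1)} := by
    intro v hv
    by_contra hvn
    simp only [Finset.mem_insert, Finset.mem_singleton] at hvn
    push_neg at hvn
    obtain ⟨x, hx, hxv⟩ := Finset.mem_image.mp hv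
    have hne : ((range (n+2)).filter (fun j => c j = v)).Nonempty :=
      ⟨x, Finset.mem_filter.mpr ⟨hx, hxv⟩⟩
    have hposS : 0 < ∑ j ∈ (range (n+2)).filter (fun j => c j = v), D j := by
      apply Finset.sum_pos _ hne
      intro j hj
      obtain ⟨hj1, hj2⟩ := Finset.mem_filter.mp hj
      rw [Finset.mem_range] at hj1
      have hj0 : j ≠ 0 := fun h => hvn.1 (by rw [← hj2, h])
      have hjn : j ≠ n+1 := fun h => hvn.2 (by rw [← hj2, h])
      exact hDpos j (by omega) (by omega)
    rw [hfiber v] at hposS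
    exact lt_irrefl 0 hposS
  have hI2 : ((range (n+2)).image c).card ≤ 2 := by
    refine le_trans (Finset.card_le_card hIsub) ?_
    refine le_trans (Finset.card_insert_le _ _) ?_
    simp
  constructor
  · omega
  · intro hlen
    have hne : c 0 ≠ c (n+1) := by
      intro h
      have hsub1 : (range (n+2)).image c ⊆ {c 0} := by
        intro v hv
        have hv2 := hIsub hv
        simp only [Finset.mem_insert, Finset.mem_singleton] at hv2 ⊢
        rcases hv2 with h1 | h1
        · exact h1
        · rw [h1, h]
      have := Finset.card_le_card hsub1
      simp only [Finset.card_singleton] at this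
      omega
    set F0 := (range (n+2)).filter (fun j => c j = c 0) with hF0
    have h0F : 0 ∈ F0 := Finset.mem_filter.mpr ⟨Finset.mem_range.mpr (by omega), rfl⟩
    have hsum := hfiber (c 0)
    rw [← hF0] at hsum
    refine ⟨F0.erase 0, ?_, ?_⟩
    · intro k hk
      obtain ⟨hk0, hkF⟩ := Finset.mem_erase.mp hk
      obtain ⟨hk1, hk2⟩ := Finset.mem_filter.mp hkF
      rw [Finset.mem_range] at hk1
      have hkn : k ≠ n+1 := fun h => hne (by rw [← hk2, h])
      exact Finset.mem_Icc.mpr ⟨by omega, by omega⟩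
    · have hsplit : D 0 + ∑ j ∈ F0.erase 0, D j = ∑ j ∈ F0, D j :=
        Finset.add_sum_erase _ _ h0F
      have hsum0 : ∑ j ∈ F0.erase 0, D j = (t : ℝ) := by
        rw [hsum] at hsplit
        rw [hD0] at hsplit
        linarith
      have hcast : ((∑ k ∈ F0.erase 0, s k : ℤ) : ℝ) = (t : ℝ) := by
        rw [← hsum0]
        push_cast
        apply Finset.sum_congr rfl
        intro k hk
        obtain ⟨hk0, hkF⟩ := Finset.mem_erase.mp hk
        obtain ⟨hk1, hk2⟩ := Finset.mem_filter.mp hkF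
        rw [Finset.mem_range] at hk1
        have hkn : k ≠ n+1 := fun h => hne (by rw [← hk2, h])
        rw [hDk k (by omega) (by omega)]
      exact_mod_cast hcast

end LowerBound
section Embed

open Finset

/-- Simulate an inequality operation by a range operation (same action on keys `0,…,n`). -/
noncomputable def ineqToRange (n : ℕ) (f : OpIneqAdd) : OpRangeAdd :=
  if f.dir then ⟨min f.a (-1), f.a, min_le_left _ _, f.b⟩
  else ⟨f.a, max f.a n, le_max_left _ _, f.b⟩

theorem ineqToRange_cond (n : ℕ) (f : OpIneqAdd) (v : ℤ) (h0 : 0 ≤ v) (hn : v ≤ (n : ℤ)) :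
    (ineqToRange n f).cond v ↔ f.cond v := by
  have hv0 : (0 : ℝ) ≤ (v : ℝ) := by exact_mod_cast h0
  have hvn : (v : ℝ) ≤ (n : ℝ) := by exact_mod_cast hn
  unfold ineqToRange OpRangeAdd.cond OpIneqAdd.cond
  by_cases hd : f.dir
  · simp only [hd, if_true]
    constructor
    · exact fun h => h.2
    · intro h
      exact ⟨le_trans (min_le_right _ _) (le_trans (by norm_num) hv0), h⟩
  · simp only [hd, if_false, Bool.false_eq_true]
    constructor
    · exact fun h => h.1
    · intro h
      exact ⟨h, le_trans hvn (le_max_right _ _)⟩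

theorem ineq_diff_to_range (n : ℕ) (βT : Fin (n+1) → ℝ) (L : List OpIneqAdd)
    (h : IsDiffIneqAdd (ssAlpha n) L (ssBS n) βT) :
    IsDiffRangeAdd (ssAlpha n) (L.map (ineqToRange n)) (ssBS n) βT := by
  unfold IsDiffRangeAdd
  funext k
  rw [applyOpsRangeAdd_eq_sum]
  have hk := congrFun h k
  rw [applyOpsIneqAdd_eq_sum] at hk
  rw [← hk]
  congr 1
  rw [List.map_map]
  refine congrArg List.sum (List.map_congr_left fun f _ => ?_)
  simp only [Function.comp_apply]
  have hb : (ineqToRange n f).b = f.b := by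
    unfold ineqToRange; by_cases hd : f.dir <;> simp [hd]
  have hcnd := ineqToRange_cond n f (ssAlpha n k) (by simp [ssAlpha])
    (by show ((k : ℕ) : ℤ) ≤ (n : ℤ); have := k.isLt; omega)
  exact if_congr hcnd hb rfl

end Embed

section Construct

open Finset

theorem ineq_construct (n : ℕ) (s : ℕ → ℤ) (t : ℤ) (hs0 : s 0 = -t)
    (S : Finset ℕ) (hS : S ⊆ Finset.Icc 1 n) (hsum : ∑ k ∈ S, s k = t) :
    ∃ L : List OpIneqAdd, IsDiffIneqAdd (ssAlpha n) L (ssBS n) (ssBT n s) ∧ L.length = n := by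
  classical
  refine ⟨(S.toList.map fun k => ⟨true, (k : ℝ) - 1, -((s k : ℤ) : ℝ)⟩) ++
      (((Finset.Icc 1 n) \ S).toList.map fun k => ⟨false, (k : ℝ), ((s k : ℤ) : ℝ)⟩), ?_, ?_⟩
  · unfold IsDiffIneqAdd
    funext j
    rw [applyOpsIneqAdd_eq_sum]
    set j' := (j : ℕ) with hj'
    have hjn : j' ≤ n := by have := j.isLt; omega
    simp only [List.map_append, List.map_map, List.sum_append]
    rw [toList_map_sum, toList_map_sum]
    simp only [Function.comp_apply]
    have hc1 : ∀ k : ℕ, (OpIneqAdd.cond ⟨true, (k : ℝ) - 1, -((s k : ℤ) : ℝ)⟩ (ssAlpha n j))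
        ↔ j' < k := by
      intro k
      show ((j' : ℤ) : ℝ) ≤ (k : ℝ) - 1 ↔ j' < k
      rw [le_sub_iff_add_le]
      constructor
      · intro h
        have : (j' : ℝ) + 1 ≤ (k : ℝ) := by push_cast at h ⊢; linarith
        exact_mod_cast this
      · intro h
        have : (j' : ℝ) + 1 ≤ (k : ℝ) := by exact_mod_cast h
        push_cast
        linarith
    have hc2 : ∀ k : ℕ, (OpIneqAdd.cond ⟨false, (k : ℝ), ((s k : ℤ) : ℝ)⟩ (ssAlpha n j))
        ↔ k ≤ j' := by
      intro k
      show (k : ℝ) ≤ ((j' : ℤ) : ℝ) ↔ k ≤ j'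
      constructor
      · intro h; exact_mod_cast h
      · intro h; exact_mod_cast h
    have e0 : ∑ k ∈ S, (if OpIneqAdd.cond ⟨true, (k : ℝ) - 1, -((s k : ℤ) : ℝ)⟩ (ssAlpha n j)
          then -((s k : ℤ) : ℝ) else 0)
        = ∑ k ∈ S.filter (fun k => j' < k), -((s k : ℤ) : ℝ) := by
      rw [Finset.sum_filter]
      apply Finset.sum_congr rfl
      intro k _
      rw [if_congr (hc1 k) rfl rfl]
    have e0' : ∑ k ∈ (Finset.Icc 1 n) \ S,
          (if OpIneqAdd.cond ⟨false, (k : ℝ), ((s k : ℤ) : ℝ)⟩ (ssAlpha n j)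
          then ((s k : ℤ) : ℝ) else 0)
        = ∑ k ∈ ((Finset.Icc 1 n) \ S).filter (fun k => k ≤ j'), ((s k : ℤ) : ℝ) := by
      rw [Finset.sum_filter]
      apply Finset.sum_congr rfl
      intro k _
      rw [if_congr (hc2 k) rfl rfl]
    rw [e0, e0']
    -- set identities
    have e1 : S.filter (fun k => k ≤ j') = (Finset.Icc 1 j') ∩ S := by
      ext k
      simp only [Finset.mem_filter, Finset.mem_inter, Finset.mem_Icc]
      constructor
      · rintro ⟨h1, h2⟩
        have := Finset.mem_Icc.mp (hS h1)
        exact ⟨⟨this.1, h2⟩, h1⟩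
      · rintro ⟨h1, h2⟩
        exact ⟨h2, h1.2⟩
    have e2 : ((Finset.Icc 1 n) \ S).filter (fun k => k ≤ j') = (Finset.Icc 1 j') \ S := by
      ext k
      simp only [Finset.mem_filter, Finset.mem_sdiff, Finset.mem_Icc]
      constructor
      · rintro ⟨⟨h1, h2⟩, h3⟩
        exact ⟨⟨h1.1, h3⟩, h2⟩
      · rintro ⟨⟨h1, h2⟩, h3⟩
        exact ⟨⟨⟨h1, by omega⟩, h3⟩, h2⟩
    have e3 : S.filter (fun k => j' < k) = S.filter (fun k => ¬ k ≤ j') := by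
      apply Finset.filter_congr
      intro k _
      simp
    have e4 := Finset.sum_filter_add_sum_filter_not S (fun k => k ≤ j')
      (fun k => ((s k : ℤ) : ℝ))
    have e5 := Finset.sum_inter_add_sum_sdiff (Finset.Icc 1 j') S (fun k => ((s k : ℤ) : ℝ))
    -- right-hand side
    have e6 : ssBT n s j = ((s 0 : ℤ) : ℝ) + ∑ ℓ ∈ Finset.Icc 1 j', ((s ℓ : ℤ) : ℝ) := by
      unfold ssBT
      rw [← hj']
      have hr : Finset.range (j' + 1) = insert 0 (Finset.Icc 1 j') := by
        ext x
        simp only [Finset.mem_range, Finset.mem_insert, Finset.mem_Icc]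
        omega
      rw [hr]
      push_cast [Finset.sum_insert (by simp : (0:ℕ) ∉ Finset.Icc 1 j')]
      ring
    rw [e6, e3]
    have hsumR : ∑ k ∈ S, ((s k : ℤ) : ℝ) = (t : ℝ) := by exact_mod_cast congrArg (Int.cast : ℤ → ℝ) hsum
    have hs0R : ((s 0 : ℤ) : ℝ) = -(t : ℝ) := by exact_mod_cast congrArg (Int.cast : ℤ → ℝ) hs0
    rw [e1] at e4
    rw [hs0R]
    rw [ssBS]
    rw [e2]
    rw [Finset.sum_neg_distrib]
    linarith [e4, e5, hsumR]
  · rw [List.length_append, List.length_map, List.length_map,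
      Finset.length_toList, Finset.length_toList]
    have h1 : (Finset.Icc 1 n \ S).card = (Finset.Icc 1 n).card - S.card :=
      Finset.card_sdiff_of_subset hS
    have h2 : S.card ≤ (Finset.Icc 1 n).card := Finset.card_le_card hS
    have h3 : (Finset.Icc 1 n).card = n := by rw [Nat.card_Icc]; omega
    omega

end Construct
/-- For the SubsetSum instance, the best diffs from `β_S` to `β_T` under `F(R,+)` have
cost `n` if and only if the best diffs from `β_S` to `β_T` under `F(≤≥,+)` have cost `n`. -/
theorem subsetSum_range_best_cost_iff_ineq_best_cost (n : ℕ) (s : ℕ → ℤ) (t : ℤ)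
    (ht : 0 < t) (hs0 : s 0 = -t) (hpos : ∀ i, 1 ≤ i → i ≤ n → 0 < s i) :
    (∃ F : List OpRangeAdd,
        IsBestDiffRangeAdd (ssAlpha n) F (ssBS n) (ssBT n s) ∧ F.length = n) ↔
      ∃ F : List OpIneqAdd,
        IsBestDiffIneqAdd (ssAlpha n) F (ssBS n) (ssBT n s) ∧ F.length = n := by
  constructor
  · rintro ⟨F, ⟨hFd, -⟩, hFlen⟩
    obtain ⟨-, hext⟩ := range_diff_lower n s t ht hs0 hpos F hFd
    obtain ⟨S, hS, hsum⟩ := hext hFlen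
    obtain ⟨L, hLd, hLlen⟩ := ineq_construct n s t hs0 S hS hsum
    refine ⟨L, ⟨hLd, ?_⟩, hLlen⟩
    intro L' hL'
    have hlow := (range_diff_lower n s t ht hs0 hpos _
      (ineq_diff_to_range n _ L' hL')).1
    rw [List.length_map] at hlow
    omega
  · rintro ⟨F, ⟨hFd, -⟩, hFlen⟩
    refine ⟨F.map (ineqToRange n), ⟨ineq_diff_to_range n _ F hFd, ?_⟩,
      by rw [List.length_map, hFlen]⟩
    intro L' hL'
    have hlow := (range_diff_lower n s t ht hs0 hpos L' hL').1
    rw [List.length_map, hFlen]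
    omega
end
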